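/- For density operators ρ, σ with supp(ρ) ⊆ supp(σ), the max-relative entropy D_max(ρ‖σ) := inf{λ : ρ ≤ 2^λ σ} satisfies D_max(ρ‖σ) ≥ 0, with equality if and only if ρ = σ. -/

import Mathlib

open Classical

open Matrix
open scoped ComplexOrder

noncomputable def msqrt {n : Type*} [Fintype n] [DecidableEq n] (A : Matrix n n ℂ) :
    Matrix n n ℂ :=
  if h : A.PosSemidef then
    (h.1.eigenvectorUnitary : Matrix n n ℂ) * diagonal ((↑) ∘ Real.sqrt ∘ h.1.eigenvalues) *
      (star (h.1.eigenvectorUnitary : Matrix n n ℂ))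
  else 0

/-- Uhlmann fidelity F_U(ρ,σ) = (Tr √(√σ ρ √σ))². -/
noncomputable def uFid {n : Type*} [Fintype n] [DecidableEq n] (ρ σ : Matrix n n ℂ) : ℝ :=
  ((msqrt (msqrt σ * ρ * msqrt σ)).trace.re) ^ 2

/-- Purified distance. -/
noncomputable def pDist {n : Type*} [Fintype n] [DecidableEq n] (ρ σ : Matrix n n ℂ) : ℝ :=
  Real.sqrt (1 - uFid ρ σ)

def IsDensity {n : Type*} [Fintype n] [DecidableEq n] (ρ : Matrix n n ℂ) : Prop :=
  ρ.PosSemidef ∧ ρ.trace = 1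

noncomputable def Dmax {n : Type*} [Fintype n] [DecidableEq n] (ρ σ : Matrix n n ℂ) : ℝ :=
  sInf {l : ℝ | (((2 : ℝ) ^ l) • σ - ρ).PosSemidef}

section SqrtAux
open scoped MatrixOrder
variable {n : Type*} [Fintype n] [DecidableEq n]

noncomputable def Matrix.PosSemidef.sqrt {A : Matrix n n ℂ} (_hA : A.PosSemidef) :
    Matrix n n ℂ := CFC.sqrt A

lemma Matrix.PosSemidef.sqrt_mul_self {A : Matrix n n ℂ} (hA : A.PosSemidef) :
    hA.sqrt * hA.sqrt = A :=
  CFC.sqrt_mul_sqrt_self A hA.nonneg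

lemma Matrix.PosSemidef.posSemidef_sqrt {A : Matrix n n ℂ} (hA : A.PosSemidef) :
    hA.sqrt.PosSemidef :=
  (CFC.sqrt_nonneg A).posSemidef

end SqrtAux

section DmaxAux

variable {n : Type*} [Fintype n] [DecidableEq n]

set_option linter.unusedSectionVars false
set_option linter.unusedTactic false
set_option maxHeartbeats 1000000

lemma real_smul_mat (r : ℝ) (M : Matrix n n ℂ) : r • M = (r : ℂ) • M := by
  ext i j; simp [Matrix.smul_apply, Complex.real_smul]

lemma psd_real_smul {M : Matrix n n ℂ} (hM : M.PosSemidef) {r : ℝ} (hr : 0 ≤ r) :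
    (r • M).PosSemidef := by
  rw [real_smul_mat]
  refine .of_dotProduct_mulVec_nonneg ?_ fun x => ?_
  · unfold Matrix.IsHermitian
    rw [conjTranspose_smul, hM.1.eq]
    norm_num
  · rw [Matrix.smul_mulVec, dotProduct_smul, smul_eq_mul]
    exact mul_nonneg (Complex.zero_le_real.mpr hr) (hM.dotProduct_mulVec_nonneg x)

lemma herm_trace_eq {A : Matrix n n ℂ} (hA : A.IsHermitian) :
    A.trace = ((∑ i, hA.eigenvalues i : ℝ) : ℂ) := by
  nth_rewrite 1 [hA.spectral_theorem]
  rw [Unitary.conjStarAlgAut_apply]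
  rw [Matrix.trace_mul_cycle]
  rw [show (star hA.eigenvectorUnitary.1 * hA.eigenvectorUnitary.1 : Matrix n n ℂ) = 1 from Matrix.mem_unitaryGroup_iff'.mp hA.eigenvectorUnitary.2]
  rw [Matrix.one_mul, Matrix.trace_diagonal]
  push_cast
  rfl

/-- A PSD matrix is dominated by its trace times the identity. -/
lemma psd_le_trace_one {A : Matrix n n ℂ} (hA : A.PosSemidef) :
    (((∑ i, hA.1.eigenvalues i : ℝ) : ℂ) • (1 : Matrix n n ℂ) - A).PosSemidef := by
  set t : ℝ := ∑ i, hA.1.eigenvalues i with ht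
  have hU : (hA.1.eigenvectorUnitary.1 : Matrix n n ℂ) * star hA.1.eigenvectorUnitary.1 = 1 :=
    Matrix.mem_unitaryGroup_iff.mp hA.1.eigenvectorUnitary.2
  have key : ((t : ℂ) • (1 : Matrix n n ℂ) - A)
      = hA.1.eigenvectorUnitary.1 *
        (Matrix.diagonal (fun i => ((t - hA.1.eigenvalues i : ℝ) : ℂ))) *
        (hA.1.eigenvectorUnitary.1)ᴴ := by
    have hdiag : Matrix.diagonal (fun i => ((t - hA.1.eigenvalues i : ℝ) : ℂ))
        = (t : ℂ) • (1 : Matrix n n ℂ) - Matrix.diagonal (RCLike.ofReal ∘ hA.1.eigenvalues) := by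
      rw [smul_one_eq_diagonal, diagonal_sub]
      congr 1; ext i; simp [Function.comp]
    rw [hdiag, Matrix.mul_sub, Matrix.sub_mul]
    rw [Matrix.mul_smul, Matrix.mul_one, Matrix.smul_mul, ← Matrix.star_eq_conjTranspose, hU]
    congr 1
    exact hA.1.spectral_theorem
  rw [key]
  apply Matrix.PosSemidef.mul_mul_conjTranspose_same
  refine Matrix.posSemidef_diagonal_iff.mpr fun i => ?_
  rw [Complex.zero_le_real, sub_nonneg, ht]
  exact Finset.single_le_sum (fun j _ => hA.eigenvalues_nonneg j) (Finset.mem_univ i)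

/-- The range of the sqrt of a PSD matrix equals the range of the matrix. -/
lemma range_sqrt_eq {A : Matrix n n ℂ} (hA : A.PosSemidef) :
    LinearMap.range (Matrix.toLin' hA.sqrt) = LinearMap.range (Matrix.toLin' A) := by
  have hsq : hA.sqrt * hA.sqrt = A := hA.sqrt_mul_self
  have hcomp : Matrix.toLin' A = (Matrix.toLin' hA.sqrt).comp (Matrix.toLin' hA.sqrt) := by
    rw [← Matrix.toLin'_mul, hsq]
  have hle : LinearMap.range (Matrix.toLin' A) ≤ LinearMap.range (Matrix.toLin' hA.sqrt) := by
    rw [hcomp]; exact LinearMap.range_comp_le_range _ _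
  have hker : LinearMap.ker (Matrix.toLin' A) = LinearMap.ker (Matrix.toLin' hA.sqrt) := by
    ext x
    simp only [LinearMap.mem_ker, Matrix.toLin'_apply]
    constructor
    · intro h
      have h0 : star x ⬝ᵥ A *ᵥ x = 0 := by rw [h, dotProduct_zero]
      have h1 : star (hA.sqrt *ᵥ x) ⬝ᵥ (hA.sqrt *ᵥ x) = 0 := by
        rw [Matrix.star_mulVec, hA.posSemidef_sqrt.1.eq, ← Matrix.dotProduct_mulVec,
          Matrix.mulVec_mulVec, hsq] at *
        · exact h0
      exact dotProduct_star_self_eq_zero.mp h1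
    · intro h
      rw [← hsq, ← Matrix.mulVec_mulVec, h, Matrix.mulVec_zero]
  refine (Submodule.eq_of_le_of_finrank_le hle ?_).symm
  have r1 := LinearMap.finrank_range_add_finrank_ker (Matrix.toLin' A)
  have r2 := LinearMap.finrank_range_add_finrank_ker (Matrix.toLin' hA.sqrt)
  rw [hker] at r1
  omega

lemma exists_smul_psd {ρ σ : Matrix n n ℂ} (hρ : ρ.PosSemidef) (hσ : σ.PosSemidef)
    (hsupp : LinearMap.range (Matrix.toLin' ρ) ≤ LinearMap.range (Matrix.toLin' σ)) :
    ∃ c : ℝ, 0 < c ∧ ((c : ℂ) • σ - ρ).PosSemidef := by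
  set R := hρ.sqrt with hR
  set S := hσ.sqrt with hS
  have hrange : LinearMap.range (Matrix.toLin' R) ≤ LinearMap.range (Matrix.toLin' S) := by
    rw [range_sqrt_eq hρ, range_sqrt_eq hσ]; exact hsupp
  -- each column of R is in the range of S
  have hcol : ∀ j : n, ∃ b : n → ℂ, S *ᵥ b = fun i => R i j := by
    intro j
    have : (fun i => R i j) ∈ LinearMap.range (Matrix.toLin' R) := by
      refine ⟨Pi.single j 1, ?_⟩
      rw [Matrix.toLin'_apply, Matrix.mulVec_single]
      ext i; simp
    obtain ⟨b, hb⟩ := hrange this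
    exact ⟨b, by rw [← Matrix.toLin'_apply]; exact hb⟩
  choose b hb using hcol
  set B : Matrix n n ℂ := Matrix.of (fun i j => b j i) with hBdef
  have hSB : S * B = R := by
    ext i j
    rw [Matrix.mul_apply]
    have := congr_fun (hb j) i
    rw [Matrix.mulVec, dotProduct] at this
    simpa [hBdef] using this
  have hρeq : ρ = S * (B * Bᴴ) * S := by
    have h1 : ρ = R * Rᴴ := by rw [hρ.posSemidef_sqrt.1.eq, hρ.sqrt_mul_self]
    rw [h1, ← hSB, Matrix.conjTranspose_mul]
    have : Sᴴ = S := hσ.posSemidef_sqrt.1.eq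
    rw [this]
    noncomm_ring
  have hM : (B * Bᴴ).PosSemidef := Matrix.posSemidef_self_mul_conjTranspose B
  set t : ℝ := ∑ i, hM.1.eigenvalues i with ht
  have ht0 : 0 ≤ t := Finset.sum_nonneg fun i _ => hM.eigenvalues_nonneg i
  have hkey : ((t : ℂ) • σ - ρ).PosSemidef := by
    have h2 : ((t : ℂ) • σ - ρ) = S * (((t : ℂ) • (1 : Matrix n n ℂ)) - B * Bᴴ) * Sᴴ := by
      rw [Matrix.mul_sub, Matrix.sub_mul, hσ.posSemidef_sqrt.1.eq]
      rw [Matrix.mul_smul, Matrix.mul_one, Matrix.smul_mul, hσ.sqrt_mul_self, hρeq]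
    rw [h2]
    exact (psd_le_trace_one hM).mul_mul_conjTranspose_same S
  refine ⟨t + 1, by linarith, ?_⟩
  have h3 : ((t + 1 : ℝ) : ℂ) • σ - ρ = ((t : ℂ) • σ - ρ) + σ := by
    push_cast; module
  rw [h3]
  exact hkey.add hσ

/-- PSD with zero trace is zero. -/
lemma psd_trace_zero {A : Matrix n n ℂ} (hA : A.PosSemidef) (h : A.trace = 0) : A = 0 := by
  have h1 := herm_trace_eq hA.1
  rw [h] at h1
  have h2 : (∑ i, hA.1.eigenvalues i : ℝ) = 0 := by exact_mod_cast h1.symm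
  have h3 : ∀ i ∈ Finset.univ, hA.1.eigenvalues i = 0 :=
    (Finset.sum_eq_zero_iff_of_nonneg fun i _ => hA.eigenvalues_nonneg i).mp h2
  have h4 : Matrix.diagonal (RCLike.ofReal ∘ hA.1.eigenvalues) = (0 : Matrix n n ℂ) := by
    have h5 : (RCLike.ofReal ∘ hA.1.eigenvalues : n → ℂ) = 0 := by
      funext i; simp [h3 i (Finset.mem_univ i)]
    rw [h5]
    ext i j
    simp [Matrix.diagonal_apply]
  calc A = _ := hA.1.spectral_theorem
    _ = 0 := by rw [h4, map_zero]

end DmaxAux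

theorem dmax_nonneg_eq_zero_iff {n : Type*} [Fintype n] [DecidableEq n]
    (ρ σ : Matrix n n ℂ) (hρ : IsDensity ρ) (hσ : IsDensity σ)
    (hsupp : LinearMap.range (Matrix.toLin' ρ) ≤ LinearMap.range (Matrix.toLin' σ)) :
    0 ≤ Dmax ρ σ ∧ (Dmax ρ σ = 0 ↔ ρ = σ) := by
  set T : Set ℝ := {l : ℝ | (((2 : ℝ) ^ l) • σ - ρ).PosSemidef} with hT
  -- nonempty
  have hne : T.Nonempty := by
    obtain ⟨c, hc, hpsd⟩ := exists_smul_psd hρ.1 hσ.1 hsupp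
    refine ⟨Real.logb 2 c, ?_⟩
    show (((2 : ℝ) ^ Real.logb 2 c) • σ - ρ).PosSemidef
    rw [Real.rpow_logb (by norm_num) (by norm_num) hc, real_smul_mat]
    exact hpsd
  -- every element is nonneg
  have hbdd : ∀ l ∈ T, (0:ℝ) ≤ l := by
    intro l hl
    have hpsd : (((2 : ℝ) ^ l) • σ - ρ).PosSemidef := hl
    have htr : (((2 : ℝ) ^ l) • σ - ρ).trace = (((2:ℝ)^l - 1 : ℝ) : ℂ) := by
      rw [Matrix.trace_sub, Matrix.trace_smul, hρ.2, hσ.2]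
      push_cast
      simp [Complex.real_smul]
    have h0 : (0:ℂ) ≤ (((2:ℝ)^l - 1 : ℝ) : ℂ) := by
      rw [← htr, herm_trace_eq hpsd.1, Complex.zero_le_real]
      exact Finset.sum_nonneg fun i _ => hpsd.eigenvalues_nonneg i
    rw [Complex.zero_le_real, sub_nonneg] at h0
    by_contra hneg
    push_neg at hneg
    have : (2:ℝ)^l < (2:ℝ)^(0:ℝ) :=
      Real.rpow_lt_rpow_left_iff (by norm_num : (1:ℝ) < 2) |>.mpr hneg
    rw [Real.rpow_zero] at this
    linarith
  have hbb : BddBelow T := ⟨0, hbdd⟩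
  have h0le : 0 ≤ Dmax ρ σ := le_csInf hne hbdd
  -- T is upward closed
  have hup : ∀ l ∈ T, ∀ l', l ≤ l' → l' ∈ T := by
    intro l hl l' hll'
    have hpsd : (((2 : ℝ) ^ l) • σ - ρ).PosSemidef := hl
    have heq : ((2 : ℝ) ^ l') • σ - ρ
        = (((2 : ℝ) ^ l) • σ - ρ) + ((2:ℝ)^l' - (2:ℝ)^l) • σ := by
      rw [sub_smul]; abel
    show (((2 : ℝ) ^ l') • σ - ρ).PosSemidef
    rw [heq]
    refine hpsd.add (psd_real_smul hσ.1 ?_)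
    rw [sub_nonneg]
    exact Real.rpow_le_rpow_left_iff (by norm_num : (1:ℝ) < 2) |>.mpr hll'
  refine ⟨h0le, ?_, ?_⟩
  · -- Dmax = 0 → ρ = σ
    intro hD
    -- every l > 0 is in T
    have hmem : ∀ l : ℝ, 0 < l → l ∈ T := by
      intro l hl
      have hD' : sInf T = 0 := hD
      have : sInf T < l := by rw [hD']; exact hl
      obtain ⟨m, hm, hml⟩ := exists_lt_of_csInf_lt hne this
      exact hup m hm l hml.le
    have hσρ : (σ - ρ).PosSemidef := by
      refine .of_dotProduct_mulVec_nonneg (hσ.1.1.sub hρ.1.1) fun x => ?_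
      set a : ℂ := star x ⬝ᵥ σ *ᵥ x with ha
      set bb : ℂ := star x ⬝ᵥ ρ *ᵥ x with hbq
      have ha0 : 0 ≤ a := hσ.1.dotProduct_mulVec_nonneg x
      have hb0 : 0 ≤ bb := hρ.1.dotProduct_mulVec_nonneg x
      have hquad : ∀ l : ℝ, 0 < l → bb.re ≤ (2:ℝ)^l * a.re := by
        intro l hl
        have h := (hmem l hl).dotProduct_mulVec_nonneg x
        rw [Matrix.sub_mulVec, dotProduct_sub, Matrix.smul_mulVec,
          dotProduct_smul] at h
        rw [sub_nonneg] at h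
        have := h.1
        simpa [Complex.smul_re] using this
      have hre : bb.re ≤ a.re := by
        have htend : Filter.Tendsto (fun l : ℝ => (2:ℝ)^l * a.re) (nhdsWithin 0 (Set.Ioi 0))
            (nhds a.re) := by
          have hc : Continuous (fun l : ℝ => (2:ℝ)^l * a.re) := by
            have : (fun l : ℝ => (2:ℝ)^l * a.re)
                = fun l : ℝ => Real.exp (Real.log 2 * l) * a.re := by
              funext l; rw [Real.rpow_def_of_pos (by norm_num : (0:ℝ) < 2)]
            rw [this]; continuity
          have := hc.tendsto 0
          simpa using this.mono_left nhdsWithin_le_nhds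
        exact ge_of_tendsto htend (Filter.eventually_of_mem self_mem_nhdsWithin
          fun l hl => hquad l hl)
      have haim : a.im = 0 := by
        have := (Complex.le_def.mp ha0).2; simpa using this.symm
      have hbim : bb.im = 0 := by
        have := (Complex.le_def.mp hb0).2; simpa using this.symm
      rw [Matrix.sub_mulVec, dotProduct_sub, ← ha, ← hbq, Complex.le_def]
      constructor
      · simp only [Complex.sub_re, Complex.zero_re]; linarith
      · simp [Complex.sub_im, haim, hbim]
    have : σ - ρ = 0 := by
      refine psd_trace_zero hσρ ?_
      rw [Matrix.trace_sub, hρ.2, hσ.2, sub_self]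
    have := sub_eq_zero.mp this
    exact this.symm
  · -- ρ = σ → Dmax = 0
    intro h
    subst h
    have h0mem : (0:ℝ) ∈ T := by
      show (((2 : ℝ) ^ (0:ℝ)) • ρ - ρ).PosSemidef
      rw [Real.rpow_zero, one_smul, sub_self]
      exact Matrix.PosSemidef.zero
    exact le_antisymm (csInf_le hbb h0mem) h0le
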